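/- In any crossed n-cube of groups (M_A), for each i ∈ ⟨n⟩ and each A ⊆ ⟨n⟩ with i ∈ A, the map μ_i : M_A → M_{A∖{i}} together with the action ^b a := h(b,a)a (for b ∈ M_{A∖{i}}, a ∈ M_A) forms a crossed module. -/

import Mathlib

/-- Transport of an element along an equality of index sets. -/
def fc {n : ℕ} {M : Finset (Fin n) → Type*} {A B : Finset (Fin n)}
    (hAB : A = B) (a : M A) : M B := hAB ▸ a

namespace CNC

variable {n : ℕ}

lemma erase_swap (A : Finset (Fin n)) (i j : Fin n) :
    (A.erase j).erase i = (A.erase i).erase j := by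
  ext x; simp [Finset.mem_erase]; try tauto

lemma erase_union (A B : Finset (Fin n)) (i : Fin n) :
    A.erase i ∪ B.erase i = (A ∪ B).erase i := by
  ext x; simp [Finset.mem_erase, Finset.mem_union]; try tauto

lemma erase_union_of_mem {B : Finset (Fin n)} {i : Fin n} (A : Finset (Fin n))
    (hi : i ∈ B) : A.erase i ∪ B = A ∪ B := by
  ext x; simp [Finset.mem_erase, Finset.mem_union]
  rcases Decidable.em (x = i) with h | h <;> simp [h, hi] <;> tauto

lemma union_erase_of_mem {A : Finset (Fin n)} {i : Fin n} (B : Finset (Fin n))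
    (hi : i ∈ A) : A ∪ B.erase i = A ∪ B := by
  ext x; simp [Finset.mem_erase, Finset.mem_union]
  rcases Decidable.em (x = i) with h | h <;> simp [h, hi] <;> tauto

lemma union_self (A : Finset (Fin n)) : A ∪ A = A := by
  ext x; simp

lemma union_comm' (A B : Finset (Fin n)) : B ∪ A = A ∪ B := by
  ext x; simp [Finset.mem_union]; try tauto

lemma union_left_absorb (A B : Finset (Fin n)) : A ∪ (A ∪ B) = A ∪ B := by
  ext x; simp [Finset.mem_union]; try tauto

lemma union_right_absorb (A B : Finset (Fin n)) : B ∪ (A ∪ B) = A ∪ B := by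
  ext x; simp [Finset.mem_union]; try tauto

lemma jac1 (A B C : Finset (Fin n)) : A ∪ ((A ∪ B) ∪ C) = (A ∪ B) ∪ C := by
  ext x; simp [Finset.mem_union]; try tauto

lemma jac2 (A B C : Finset (Fin n)) : C ∪ ((C ∪ A) ∪ B) = (C ∪ A) ∪ B := by
  ext x; simp [Finset.mem_union]; try tauto

lemma jac2' (A B C : Finset (Fin n)) : (C ∪ A) ∪ B = (A ∪ B) ∪ C := by
  ext x; simp [Finset.mem_union]; try tauto

lemma jac3 (A B C : Finset (Fin n)) : B ∪ ((B ∪ C) ∪ A) = (B ∪ C) ∪ A := by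
  ext x; simp [Finset.mem_union]; try tauto

lemma jac3' (A B C : Finset (Fin n)) : (B ∪ C) ∪ A = (A ∪ B) ∪ C := by
  ext x; simp [Finset.mem_union]; try tauto

lemma union_of_subset {A B : Finset (Fin n)} (hAB : A ⊆ B) : A ∪ B = B :=
  Finset.union_eq_right.mpr hAB


end CNC

open CNC commutatorElement in
/-- A crossed `n`-cube of groups (Ellis–Steiner): a family of groups `M A`
for `A ⊆ ⟨n⟩`, morphisms `μᵢ : M A → M (A∖{i})` and functions
`h : M A × M B → M (A∪B)` satisfying axioms (1)–(11), where `ᵃb` denotes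
`h(a,b)·b`. -/
structure CrossedNCube (n : ℕ) (M : Finset (Fin n) → Type*)
    [∀ A, Group (M A)] where
  mu : ∀ (i : Fin n) (A : Finset (Fin n)), M A →* M (A.erase i)
  h : ∀ (A B : Finset (Fin n)), M A → M B → M (A ∪ B)
  ax1 : ∀ (i : Fin n) (A : Finset (Fin n)) (hi : i ∉ A) (a : M A),
    mu i A a = fc (Finset.erase_eq_of_notMem hi).symm a
  ax2 : ∀ (i j : Fin n) (A : Finset (Fin n)) (a : M A),
    mu i (A.erase j) (mu j A a) =
      fc (erase_swap A i j).symm (mu j (A.erase i) (mu i A a))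
  ax3 : ∀ (i : Fin n) (A B : Finset (Fin n)) (a : M A) (b : M B),
    mu i (A ∪ B) (h A B a b) =
      fc (erase_union A B i) (h (A.erase i) (B.erase i) (mu i A a) (mu i B b))
  ax4a : ∀ (i : Fin n) (A B : Finset (Fin n)), i ∈ A → ∀ hiB : i ∈ B,
    ∀ (a : M A) (b : M B),
    h A B a b = fc (erase_union_of_mem A hiB) (h (A.erase i) B (mu i A a) b)
  ax4b : ∀ (i : Fin n) (A B : Finset (Fin n)), ∀ hiA : i ∈ A, i ∈ B →
    ∀ (a : M A) (b : M B),
    h A B a b = fc (union_erase_of_mem B hiA) (h A (B.erase i) a (mu i B b))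
  ax5 : ∀ (A : Finset (Fin n)) (a a' : M A),
    h A A a a' = fc (union_self A).symm ⁅a, a'⁆
  ax6 : ∀ (A B : Finset (Fin n)) (a : M A) (b : M B),
    h A B a b = (fc (union_comm' A B) (h B A b a))⁻¹
  ax7a : ∀ (A B : Finset (Fin n)) (b : M B), h A B 1 b = 1
  ax7b : ∀ (A B : Finset (Fin n)) (a : M A), h A B a 1 = 1
  ax8 : ∀ (A B : Finset (Fin n)) (a a' : M A) (b : M B),
    h A B (a * a') b =
      (fc (union_left_absorb A B) (h A (A ∪ B) a (h A B a' b)) *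
          h A B a' b) * h A B a b
  ax9 : ∀ (A B : Finset (Fin n)) (a : M A) (b b' : M B),
    h A B a (b * b') =
      h A B a b *
        (fc (union_right_absorb A B) (h B (A ∪ B) b (h A B a b')) *
          h A B a b')
  ax10 : ∀ (A B C : Finset (Fin n)) (a : M A) (b : M B) (c : M C),
    (fc (jac1 A B C)
        (h A ((A ∪ B) ∪ C) a (h (A ∪ B) C (h A B a⁻¹ b) c)) *
      h (A ∪ B) C (h A B a⁻¹ b) c) *
    fc (jac2' A B C)
      (fc (jac2 A B C)
          (h C ((C ∪ A) ∪ B) c (h (C ∪ A) B (h C A c⁻¹ a) b)) *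
        h (C ∪ A) B (h C A c⁻¹ a) b) *
    fc (jac3' A B C)
      (fc (jac3 A B C)
          (h B ((B ∪ C) ∪ A) b (h (B ∪ C) A (h B C b⁻¹ c) a)) *
        h (B ∪ C) A (h B C b⁻¹ c) a) = 1
  ax11 : ∀ (A B C : Finset (Fin n)) (hAB : A ⊆ B) (hAC : A ⊆ C)
      (a : M A) (b : M B) (c : M C),
    fc (union_of_subset (hAB.trans Finset.subset_union_left))
        (h A (B ∪ C) a (h B C b c)) * h B C b c =
      h B C (fc (union_of_subset hAB) (h A B a b) * b)
        (fc (union_of_subset hAC) (h A C a c) * c)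

lemma CNC.erase_union_self {n : ℕ} (A : Finset (Fin n)) (i : Fin n) :
    A.erase i ∪ A = A := by
  ext x; simp [Finset.mem_erase, Finset.mem_union]; try tauto

/-- The action `ᵇa = h(b,a)·a` of `M (A∖{i})` on `M A`. -/
def ncAct {n : ℕ} {M : Finset (Fin n) → Type*} [∀ A, Group (M A)]
    (X : CrossedNCube n M) (i : Fin n) (A : Finset (Fin n))
    (b : M (A.erase i)) (a : M A) : M A :=
  fc (CNC.erase_union_self A i) (X.h (A.erase i) A b a) * a


section NCAux

variable {n : ℕ} {M : Finset (Fin n) → Type*} [∀ A, Group (M A)]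

open commutatorElement

@[simp] lemma fc_trans {A B C : Finset (Fin n)} (e : A = B) (e' : B = C) (a : M A) :
    fc e' (fc e a) = fc (e.trans e') a := by subst e; subst e'; rfl

@[simp] lemma fc_mul {A B : Finset (Fin n)} (e : A = B) (x y : M A) :
    fc e (x * y) = fc e x * fc e y := by subst e; rfl

@[simp] lemma fc_one {A B : Finset (Fin n)} (e : A = B) :
    fc e (1 : M A) = 1 := by subst e; rfl

@[simp] lemma fc_refl {A : Finset (Fin n)} (e : A = A) (a : M A) : fc e a = a := rfl

variable (X : CrossedNCube n M)

@[simp] lemma h_fc_left {A A' B : Finset (Fin n)} (e : A = A') (a : M A) (b : M B) :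
    X.h A' B (fc e a) b = fc (congrArg (· ∪ B) e) (X.h A B a b) := by subst e; rfl

@[simp] lemma h_fc_right {A B B' : Finset (Fin n)} (e : B = B') (a : M A) (b : M B) :
    X.h A B' a (fc e b) = fc (congrArg (A ∪ ·) e) (X.h A B a b) := by subst e; rfl

@[simp] lemma mu_fc {A A' : Finset (Fin n)} (i : Fin n) (e : A = A') (a : M A) :
    X.mu i A' (fc e a) = fc (congrArg (·.erase i) e) (X.mu i A a) := by subst e; rfl

/-- normalized `h : M (A∖i) × M A → M A`. -/
def hq (i : Fin n) (A : Finset (Fin n)) (b : M (A.erase i)) (a : M A) : M A :=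
  fc (CNC.erase_union_self A i) (X.h (A.erase i) A b a)

lemma ncAct_def (i : Fin n) (A : Finset (Fin n)) (b : M (A.erase i)) (a : M A) :
    ncAct X i A b a = hq X i A b a * a := rfl

lemma hAA (A : Finset (Fin n)) (a a' : M A) :
    fc (CNC.union_self A) (X.h A A a a') = ⁅a, a'⁆ := by
  rw [X.ax5]; simp

lemma hq_one (i : Fin n) (A : Finset (Fin n)) (a : M A) :
    hq X i A 1 a = 1 := by
  rw [hq, X.ax7a]; simp

lemma hq_mul_left (i : Fin n) (A : Finset (Fin n)) (b b' : M (A.erase i)) (a : M A) :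
    hq X i A (b * b') a = hq X i A b (hq X i A b' a) * hq X i A b' a * hq X i A b a := by
  simp only [hq, X.ax8, fc_mul, fc_trans, h_fc_right]

lemma hq_mul_right (i : Fin n) (A : Finset (Fin n)) (b : M (A.erase i)) (a a' : M A) :
    hq X i A b (a * a') = hq X i A b a * (⁅a, hq X i A b a'⁆ * hq X i A b a') := by
  rw [← hAA X A a (hq X i A b a')]
  simp only [hq, X.ax9, fc_mul, fc_trans, h_fc_right]

lemma mu_hq (i : Fin n) (A : Finset (Fin n)) (b : M (A.erase i)) (a : M A) :
    X.mu i A (hq X i A b a) = ⁅b, X.mu i A a⁆ := by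
  rw [hq, mu_fc, X.ax3, X.ax1 i (A.erase i) (Finset.notMem_erase i A) b]
  rw [← hAA X (A.erase i) b (X.mu i A a)]
  simp only [h_fc_left, fc_trans, fc_refl]

lemma hq_mu (i : Fin n) (A : Finset (Fin n)) (hi : i ∈ A) (a a' : M A) :
    hq X i A (X.mu i A a) a' = ⁅a, a'⁆ := by
  have h4 := X.ax4a i A A hi hi a a'
  rw [← hAA X A a a', h4]
  simp only [fc_trans, fc_refl, hq]

end NCAux

/-- In any crossed `n`-cube of groups `(M_A)`, for each `i ∈ A ⊆ ⟨n⟩`, the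
map `μᵢ : M A → M (A∖{i})`, together with the action `ᵇa := h(b,a)·a` of
`M (A∖{i})` on `M A`, is a crossed module. -/
theorem crossedNCube_mu_crossedModule {n : ℕ}
    {M : Finset (Fin n) → Type*} [∀ A, Group (M A)]
    (X : CrossedNCube n M) (i : Fin n) (A : Finset (Fin n)) (hi : i ∈ A) :
    -- `ncAct` is an action by automorphisms:
    (∀ a : M A, ncAct X i A 1 a = a) ∧
    (∀ (b b' : M (A.erase i)) (a : M A),
      ncAct X i A (b * b') a = ncAct X i A b (ncAct X i A b' a)) ∧
    (∀ (b : M (A.erase i)) (a a' : M A),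
      ncAct X i A b (a * a') = ncAct X i A b a * ncAct X i A b a') ∧
    -- equivariance:
    (∀ (b : M (A.erase i)) (a : M A),
      X.mu i A (ncAct X i A b a) = b * X.mu i A a * b⁻¹) ∧
    -- the Peiffer identity:
    (∀ a a' : M A, ncAct X i A (X.mu i A a) a' = a * a' * a⁻¹) := by
  refine ⟨?_, ?_, ?_, ?_, ?_⟩
  · intro a
    rw [ncAct_def, hq_one, one_mul]
  · intro b b' a
    simp only [ncAct_def, hq_mul_left, hq_mul_right, commutatorElement_def]
    group
  · intro b a a'
    simp only [ncAct_def, hq_mul_right, commutatorElement_def]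
    group
  · intro b a
    rw [ncAct_def, map_mul, mu_hq, commutatorElement_def]
    group
  · intro a a'
    rw [ncAct_def, hq_mu X i A hi, commutatorElement_def]
    group
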